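/- Let A be a Babelian 3×3 advantage matrix (a_{ij} = a > 0 for all i ≠ j) and let F : S₃ → S₃ be the associated Variational Learning dynamics. Then none of the vertex fixed points v₁ = (1,0,0), v₂ = (0,1,0), v₃ = (0,0,1) is asymptotically stable: for each vertex v_i and every relative neighbourhood U of v_i in S₃, there exists q ∈ U such that the iterates Fⁿ(q) do not converge to v_i. -/

import Mathlib

open Finset Filter Topology

/-- The simplex `S₃` of probability vectors over three grammars. -/
def simplex3 : Set (Fin 3 → ℝ) :=
  {p | (∀ i, 0 ≤ p i) ∧ ∑ i, p i = 1}

/-- The penalty probability `c_i(p) = ∑_{j ≠ i} a_{ij} p_j`. -/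
def penalty (A : Matrix (Fin 3) (Fin 3) ℝ) (p : Fin 3 → ℝ) (i : Fin 3) : ℝ :=
  ∑ j ∈ Finset.univ.filter (fun j => j ≠ i), A i j * p j

/-- The Variational Learning dynamics
`F_i(p) = ∏_{j ≠ i} c_j(p) / ∑_m ∏_{k ≠ m} c_k(p)`. -/
noncomputable def VLdyn (A : Matrix (Fin 3) (Fin 3) ℝ) (p : Fin 3 → ℝ) (i : Fin 3) : ℝ :=
  (∏ j ∈ Finset.univ.filter (fun j => j ≠ i), penalty A p j) /
    (∑ m, ∏ k ∈ Finset.univ.filter (fun k => k ≠ m), penalty A p k)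

/-- The vertex `v_i` of the simplex, i.e. the state of total dominance of grammar `G_i`. -/
def vertex (i : Fin 3) : Fin 3 → ℝ := fun j => if j = i then 1 else 0

/-- The symmetric point on the line `p_j = p_k` (`j, k ≠ i`) with `p_i = x`. -/
noncomputable def pt (i : Fin 3) (x : ℝ) : Fin 3 → ℝ := fun j => if j = i then x else (1 - x) / 2

/-- The induced one-dimensional dynamics on the invariant line. -/
noncomputable def gmap (x : ℝ) : ℝ := (1 + x) / (5 - 3 * x)

theorem key (a : ℝ) (ha : 0 < a) (A : Matrix (Fin 3) (Fin 3) ℝ)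
    (hA : ∀ i j, i ≠ j → A i j = a) (i : Fin 3) (x : ℝ) (h0 : 0 ≤ x) (h1 : x ≤ 1) :
    VLdyn A (pt i x) = pt i (gmap x) := by
  have h5 : (0:ℝ) < 5 - 3 * x := by nlinarith
  have hx1 : (0:ℝ) < 1 + x := by nlinarith
  have h01 := hA 0 1 (by decide)
  have h02 := hA 0 2 (by decide)
  have h10 := hA 1 0 (by decide)
  have h12 := hA 1 2 (by decide)
  have h20 := hA 2 0 (by decide)
  have h21 := hA 2 1 (by decide)
  have hpen : penalty A (pt i x) = fun j => if j = i then a * (1 - x) else a * (1 + x) / 2 := by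
    funext j
    fin_cases i <;> fin_cases j <;>
      · simp [penalty, Finset.sum_filter, Fin.sum_univ_three, pt,
          h01, h02, h10, h12, h20, h21]
        try ring
  have hD : (∑ m, ∏ k ∈ Finset.univ.filter (fun k => k ≠ m), penalty A (pt i x) k)
      = a ^ 2 * (1 + x) * (5 - 3 * x) / 4 := by
    rw [hpen]
    fin_cases i <;>
      · simp [Finset.prod_filter, Fin.prod_univ_three, Fin.sum_univ_three]
        try ring
  have hnum : ∀ j : Fin 3, (∏ k ∈ Finset.univ.filter (fun k => k ≠ j), penalty A (pt i x) k)
      = if j = i then (a * (1 + x) / 2) ^ 2 else a * (1 - x) * (a * (1 + x) / 2) := by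
    intro j
    rw [hpen]
    fin_cases i <;> fin_cases j <;>
      · simp [Finset.prod_filter, Fin.prod_univ_three]
        try ring
  funext j
  show (∏ k ∈ Finset.univ.filter (fun k => k ≠ j), penalty A (pt i x) k) /
    (∑ m, ∏ k ∈ Finset.univ.filter (fun k => k ≠ m), penalty A (pt i x) k) = pt i (gmap x) j
  rw [hD, hnum j, pt, gmap]
  by_cases hj : j = i <;> simp only [hj, if_pos, if_neg, ite_true, ite_false]
  · field_simp
    ring
  · field_simp [h5.ne', hx1.ne', ha.ne']
    have h5' : (5:ℝ) - x * 3 ≠ 0 := by intro h; linarith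
    field_simp
    ring

theorem gmap_bound (b x : ℝ) (hb : 1/3 ≤ b) (hb1 : b ≤ 1) (h0 : 0 ≤ x) (hxb : x ≤ b) :
    0 ≤ gmap x ∧ gmap x ≤ b := by
  have h5 : (0:ℝ) < 5 - 3 * x := by nlinarith
  constructor
  · exact div_nonneg (by linarith) h5.le
  · rw [gmap, div_le_iff₀ h5]; nlinarith

theorem pt_mem (i : Fin 3) (x : ℝ) (h0 : 0 ≤ x) (h1 : x ≤ 1) : pt i x ∈ simplex3 := by
  constructor
  · intro j
    by_cases hj : j = i <;> simp [pt, hj] <;> linarith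
  · fin_cases i <;> simp [pt, Fin.sum_univ_three] <;> ring

theorem pt_one (i : Fin 3) : pt i 1 = vertex i := by
  funext j; by_cases hj : j = i <;> simp [pt, vertex, hj]

theorem stmt_12 (a : ℝ) (ha : 0 < a) (A : Matrix (Fin 3) (Fin 3) ℝ)
    (hdiag : ∀ i, A i i = 0) (hA : ∀ i j, i ≠ j → A i j = a) :
    ∀ i : Fin 3, ∀ U ∈ 𝓝[simplex3] (vertex i), ∃ q ∈ U,
      ¬ Tendsto (fun n => (VLdyn A)^[n] q) atTop (𝓝 (vertex i)) := by
  intro i U hU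
  have hcont : Continuous (pt i) := by
    apply continuous_pi
    intro j
    by_cases hj : j = i <;> simp only [pt, hj, ite_true, ite_false] <;> fun_prop
  have hmap : Tendsto (pt i) (𝓝[Set.Ico (1/3:ℝ) 1] 1) (𝓝[simplex3] (vertex i)) := by
    rw [tendsto_nhdsWithin_iff]
    constructor
    · have h := hcont.tendsto 1
      rw [pt_one] at h
      exact h.mono_left nhdsWithin_le_nhds
    · filter_upwards [self_mem_nhdsWithin] with x hx
      exact pt_mem i x (by linarith [hx.1]) hx.2.le
  haveI : (𝓝[Set.Ico (1/3:ℝ) 1] (1:ℝ)).NeBot := by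
    apply mem_closure_iff_nhdsWithin_neBot.mp
    rw [closure_Ico (by norm_num : (1/3:ℝ) ≠ 1)]
    exact ⟨by norm_num, le_refl 1⟩
  obtain ⟨x, hxI, hxU⟩ := Filter.nonempty_of_mem
    (Filter.inter_mem self_mem_nhdsWithin (hmap hU))
  refine ⟨pt i x, hxU, fun hT => ?_⟩
  have hx13 : (1/3:ℝ) ≤ x := hxI.1
  have hx1 : x < 1 := hxI.2
  have horb : ∀ n, ∃ y, 0 ≤ y ∧ y ≤ x ∧ (VLdyn A)^[n] (pt i x) = pt i y := by
    intro n
    induction n with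
    | zero => exact ⟨x, by linarith, le_refl x, rfl⟩
    | succ n ih =>
      obtain ⟨y, hy0, hyx, hEq⟩ := ih
      obtain ⟨hg0, hgb⟩ := gmap_bound x y hx13 hx1.le hy0 hyx
      refine ⟨gmap y, hg0, hgb, ?_⟩
      rw [Function.iterate_succ_apply', hEq, key a ha A hA i y hy0 (by linarith)]
  have hcoord : Tendsto (fun n => ((VLdyn A)^[n] (pt i x)) i) atTop (𝓝 (vertex i i)) :=
    ((continuous_apply i).tendsto _).comp hT
  have hle : ∀ n, ((VLdyn A)^[n] (pt i x)) i ≤ x := by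
    intro n
    obtain ⟨y, _, hyx, hEq⟩ := horb n
    rw [hEq]
    simpa [pt] using hyx
  have hfin := le_of_tendsto hcoord (Filter.Eventually.of_forall hle)
  simp [vertex] at hfin
  linarith
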